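/- arXiv:2503.10932 — 5 statements merged into one kernel-verified Lean document; each statement's English description precedes it below -/
import Mathlib

section
/- Let N₁, N₂ be nonnegative integers and let δ₂ : {0,...,N₁} × {0,...,N₂} → [0,1] be symmetric (δ₂(n₁,n₂) + δ₂(N₁-n₁, N₂-n₂) = 1). Define regret R(μ₁,μ₂) = max{μ₁,μ₂} - μ₁·(1 - E(μ₁,μ₂)) - μ₂·E(μ₁,μ₂), where E is the expected probability of choosing treatment 2 (binomial expectation of δ₂). Then R(1-μ₁, 1-μ₂) = R(μ₁, μ₂) for all μ₁, μ₂ ∈ [0,1]. -/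
/-- Expected probability of assigning treatment 2 under rule `δ₂`. -/
noncomputable def expDelta (N₁ N₂ : ℕ) (δ₂ : ℕ → ℕ → ℝ) (μ₁ μ₂ : ℝ) : ℝ :=
  ∑ n₁ ∈ Finset.range (N₁ + 1), ∑ n₂ ∈ Finset.range (N₂ + 1),
    δ₂ n₁ n₂ * (N₁.choose n₁ : ℝ) * μ₁ ^ n₁ * (1 - μ₁) ^ (N₁ - n₁) *
      (N₂.choose n₂ : ℝ) * μ₂ ^ n₂ * (1 - μ₂) ^ (N₂ - n₂)

/-- Regret of the rule `δ₂` at the mean vector `(μ₁, μ₂)`. -/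
noncomputable def regret2 (N₁ N₂ : ℕ) (δ₂ : ℕ → ℕ → ℝ) (μ₁ μ₂ : ℝ) : ℝ :=
  max μ₁ μ₂ - μ₁ * (1 - expDelta N₁ N₂ δ₂ μ₁ μ₂) - μ₂ * expDelta N₁ N₂ δ₂ μ₁ μ₂

lemma binom_sum (N : ℕ) (μ : ℝ) :
    ∑ n ∈ Finset.range (N + 1), (N.choose n : ℝ) * μ ^ n * (1 - μ) ^ (N - n) = 1 := by
  have h : (μ + (1 - μ)) ^ N = 1 := by norm_num
  rw [add_pow] at h
  conv_rhs => rw [← h]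
  apply Finset.sum_congr rfl
  intro n hn
  ring

lemma expDelta_sym (N₁ N₂ : ℕ) (δ₂ : ℕ → ℕ → ℝ)
    (hsym : ∀ n₁ ≤ N₁, ∀ n₂ ≤ N₂, δ₂ n₁ n₂ + δ₂ (N₁ - n₁) (N₂ - n₂) = 1)
    (μ₁ μ₂ : ℝ) :
    expDelta N₁ N₂ δ₂ (1 - μ₁) (1 - μ₂) = 1 - expDelta N₁ N₂ δ₂ μ₁ μ₂ := by
  unfold expDelta
  have key : ∀ n₁ ∈ Finset.range (N₁ + 1), ∀ n₂ ∈ Finset.range (N₂ + 1),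
      δ₂ (N₁ - n₁) (N₂ - n₂) = 1 - δ₂ n₁ n₂ := by
    intro n₁ h1 n₂ h2
    have := hsym n₁ (Nat.lt_succ_iff.mp (Finset.mem_range.mp h1))
      n₂ (Nat.lt_succ_iff.mp (Finset.mem_range.mp h2))
    linarith
  have reflect : ∑ n₁ ∈ Finset.range (N₁ + 1), ∑ n₂ ∈ Finset.range (N₂ + 1),
      δ₂ n₁ n₂ * (N₁.choose n₁ : ℝ) * (1-μ₁) ^ n₁ * (1 - (1-μ₁)) ^ (N₁ - n₁) *
        (N₂.choose n₂ : ℝ) * (1-μ₂) ^ n₂ * (1 - (1-μ₂)) ^ (N₂ - n₂)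
      = ∑ n₁ ∈ Finset.range (N₁ + 1), ∑ n₂ ∈ Finset.range (N₂ + 1),
      δ₂ (N₁ - n₁) (N₂ - n₂) * (N₁.choose (N₁ - n₁) : ℝ) * (1-μ₁) ^ (N₁ - n₁) * (1 - (1-μ₁)) ^ (N₁ - (N₁ - n₁)) *
        (N₂.choose (N₂ - n₂) : ℝ) * (1-μ₂) ^ (N₂ - n₂) * (1 - (1-μ₂)) ^ (N₂ - (N₂ - n₂)) := by
    rw [← Finset.sum_range_reflect]
    apply Finset.sum_congr rfl
    intro n₁ h1
    rw [← Finset.sum_range_reflect]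
    apply Finset.sum_congr rfl
    intro n₂ h2
    have e1 : N₁ + 1 - 1 - n₁ = N₁ - n₁ := by omega
    have e2 : N₂ + 1 - 1 - n₂ = N₂ - n₂ := by omega
    rw [e1, e2]
  rw [reflect]
  have main : ∑ n₁ ∈ Finset.range (N₁ + 1), ∑ n₂ ∈ Finset.range (N₂ + 1),
      δ₂ (N₁ - n₁) (N₂ - n₂) * (N₁.choose (N₁ - n₁) : ℝ) * (1-μ₁) ^ (N₁ - n₁) * (1 - (1-μ₁)) ^ (N₁ - (N₁ - n₁)) *
        (N₂.choose (N₂ - n₂) : ℝ) * (1-μ₂) ^ (N₂ - n₂) * (1 - (1-μ₂)) ^ (N₂ - (N₂ - n₂))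
      = ∑ n₁ ∈ Finset.range (N₁ + 1), ∑ n₂ ∈ Finset.range (N₂ + 1),
      (1 - δ₂ n₁ n₂) * (N₁.choose n₁ : ℝ) * μ₁ ^ n₁ * (1 - μ₁) ^ (N₁ - n₁) *
        (N₂.choose n₂ : ℝ) * μ₂ ^ n₂ * (1 - μ₂) ^ (N₂ - n₂) := by
    apply Finset.sum_congr rfl; intro n₁ h1
    apply Finset.sum_congr rfl; intro n₂ h2
    have hn1 : n₁ ≤ N₁ := Nat.lt_succ_iff.mp (Finset.mem_range.mp h1)
    have hn2 : n₂ ≤ N₂ := Nat.lt_succ_iff.mp (Finset.mem_range.mp h2)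
    rw [key n₁ h1 n₂ h2, Nat.choose_symm hn1, Nat.choose_symm hn2,
      Nat.sub_sub_self hn1, Nat.sub_sub_self hn2]
    ring
  rw [main]
  have expand : ∀ n₁ n₂ : ℕ,
      (1 - δ₂ n₁ n₂) * (N₁.choose n₁ : ℝ) * μ₁ ^ n₁ * (1 - μ₁) ^ (N₁ - n₁) *
        (N₂.choose n₂ : ℝ) * μ₂ ^ n₂ * (1 - μ₂) ^ (N₂ - n₂)
      = ((N₁.choose n₁ : ℝ) * μ₁ ^ n₁ * (1 - μ₁) ^ (N₁ - n₁)) *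
        ((N₂.choose n₂ : ℝ) * μ₂ ^ n₂ * (1 - μ₂) ^ (N₂ - n₂))
        - δ₂ n₁ n₂ * (N₁.choose n₁ : ℝ) * μ₁ ^ n₁ * (1 - μ₁) ^ (N₁ - n₁) *
          (N₂.choose n₂ : ℝ) * μ₂ ^ n₂ * (1 - μ₂) ^ (N₂ - n₂) := by
    intro n₁ n₂; ring
  simp only [expand, Finset.sum_sub_distrib]
  rw [← Finset.sum_mul_sum]
  rw [binom_sum, binom_sum]
  ring

/-- for a symmetric rule, regret is invariant under
`(μ₁,μ₂) ↦ (1-μ₁, 1-μ₂)`. -/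
theorem stmt3 (N₁ N₂ : ℕ) (δ₂ : ℕ → ℕ → ℝ)
    (hrange : ∀ n₁ ≤ N₁, ∀ n₂ ≤ N₂, δ₂ n₁ n₂ ∈ Set.Icc (0:ℝ) 1)
    (hsym : ∀ n₁ ≤ N₁, ∀ n₂ ≤ N₂, δ₂ n₁ n₂ + δ₂ (N₁ - n₁) (N₂ - n₂) = 1)
    (μ₁ μ₂ : ℝ) (h₁ : μ₁ ∈ Set.Icc (0:ℝ) 1) (h₂ : μ₂ ∈ Set.Icc (0:ℝ) 1) :
    regret2 N₁ N₂ δ₂ (1 - μ₁) (1 - μ₂) = regret2 N₁ N₂ δ₂ μ₁ μ₂ := by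
  unfold regret2
  rw [expDelta_sym N₁ N₂ δ₂ hsym μ₁ μ₂]
  rcases le_total μ₁ μ₂ with h | h
  · rw [max_eq_right h, max_eq_left (by linarith : 1 - μ₂ ≤ 1 - μ₁)]
    ring
  · rw [max_eq_left h, max_eq_right (by linarith : 1 - μ₁ ≤ 1 - μ₂)]
    ring
end

section
/- Under the hypotheses of the discretization lemma (M compact, R(δ,·) continuous in μ uniformly in δ, M_m an ε_m-discretization with ε_m → 0, V and V_m the minimax values over M and M_m respectively), if δ_m is any sequence of rules satisfying V_m - max_{μ∈M_m} R(δ_m, μ) → 0, then sup_{μ∈M} R(δ_m, μ) → V. -/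
/-- under the hypotheses of the discretization lemma, any sequence of rules `δ_m`
that is approximately minimax for the discretized games (`V_m - max_{μ∈M_m} R(δ_m,μ) → 0`)
satisfies `sup_{μ∈M} R(δ_m, μ) → V`. -/
theorem stmt7 {T : ℕ} {D : Type*} [Nonempty D]
    (M : Set (EuclideanSpace ℝ (Fin T))) (hMcompact : IsCompact M) (hMne : M.Nonempty)
    (R : D → EuclideanSpace ℝ (Fin T) → ℝ)
    (hcont : ∀ lam > (0:ℝ), ∃ η > (0:ℝ), ∀ μ ∈ M, ∀ μ' ∈ M,
      ‖μ - μ'‖ < η → ∀ δ : D, |R δ μ - R δ μ'| < lam)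
    (Mm : ℕ → Finset (EuclideanSpace ℝ (Fin T)))
    (hsub : ∀ m, ↑(Mm m) ⊆ M) (hMmne : ∀ m, (Mm m).Nonempty)
    (ε : ℕ → ℝ)
    (hdisc : ∀ m, ∀ μ ∈ M, ∃ ν ∈ Mm m, ‖μ - ν‖ < ε m)
    (hε : Filter.Tendsto ε Filter.atTop (nhds 0))
    (δm : ℕ → D)
    (happrox : Filter.Tendsto
      (fun m => (⨅ δ : D, (Mm m).sup' (hMmne m) (R δ)) - (Mm m).sup' (hMmne m) (R (δm m)))
      Filter.atTop (nhds 0)) :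
    Filter.Tendsto (fun m => sSup (R (δm m) '' M)) Filter.atTop
      (nhds (⨅ δ : D, sSup (R δ '' M))) := by
  set S : D → ℝ := fun δ => sSup (R δ '' M) with hS
  set Sm : ℕ → D → ℝ := fun m δ => (Mm m).sup' (hMmne m) (R δ) with hSm
  have hne : ∀ δ : D, (R δ '' M).Nonempty := fun δ => hMne.image _
  -- boundedness above of R δ on M
  have hbdd : ∀ δ : D, BddAbove (R δ '' M) := by
    intro δ
    obtain ⟨η, hη, hη'⟩ := hcont 1 one_pos
    obtain ⟨m0, hm0⟩ := (hε.eventually (gt_mem_nhds hη)).exists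
    refine ⟨Sm m0 δ + 1, ?_⟩
    rintro x ⟨μ, hμ, rfl⟩
    obtain ⟨ν, hν, hνd⟩ := hdisc m0 μ hμ
    have h1 := hη' μ hμ ν (hsub m0 hν) (hνd.trans hm0) δ
    have h2 := Finset.le_sup' (R δ) hν
    have h3 := (abs_lt.mp h1).2
    simp only [hSm]
    linarith
  -- key comparison between S and Sm
  have key : ∀ lam > (0:ℝ), ∀ᶠ m in Filter.atTop,
      ∀ δ : D, S δ ≤ Sm m δ + lam ∧ Sm m δ ≤ S δ := by
    intro lam hlam
    obtain ⟨η, hη, hη'⟩ := hcont lam hlam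
    filter_upwards [hε.eventually (gt_mem_nhds hη)] with m hm
    intro δ
    constructor
    · apply csSup_le (hne δ)
      rintro x ⟨μ, hμ, rfl⟩
      obtain ⟨ν, hν, hνd⟩ := hdisc m μ hμ
      have h1 := hη' μ hμ ν (hsub m hν) (hνd.trans hm) δ
      have h2 := Finset.le_sup' (R δ) hν
      have h3 := (abs_lt.mp h1).2
      simp only [hSm]
      linarith
    · apply Finset.sup'_le
      intro ν hν
      exact le_csSup (hbdd δ) ⟨ν, hsub m hν, rfl⟩
  -- comparison of the minimax values
  have keyV : ∀ lam > (0:ℝ), ∀ᶠ m in Filter.atTop,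
      |(⨅ δ : D, Sm m δ) - (⨅ δ : D, S δ)| ≤ lam := by
    intro lam hlam
    filter_upwards [key lam hlam] with m hm
    by_cases hB : BddBelow (Set.range S)
    · obtain ⟨b, hb⟩ := hB
      have hBm : BddBelow (Set.range (Sm m)) := by
        refine ⟨b - lam, ?_⟩
        rintro y ⟨δ, rfl⟩
        have h1 := (hm δ).1
        have h2 := hb ⟨δ, rfl⟩
        linarith
      have h1 : (⨅ δ : D, Sm m δ) ≤ ⨅ δ : D, S δ :=
        ciInf_mono hBm fun δ => (hm δ).2
      have h2 : (⨅ δ : D, S δ) - lam ≤ ⨅ δ : D, Sm m δ := by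
        apply le_ciInf
        intro δ
        have h3 : (⨅ δ : D, S δ) ≤ S δ := ciInf_le ⟨b, hb⟩ δ
        have h4 := (hm δ).1
        linarith
      rw [abs_le]
      constructor <;> linarith
    · have hS0 : (⨅ δ : D, S δ) = 0 := Real.iInf_of_not_bddBelow hB
      have hBm : ¬ BddBelow (Set.range (Sm m)) := by
        rintro ⟨b, hb⟩
        apply hB
        refine ⟨b, ?_⟩
        rintro y ⟨δ, rfl⟩
        have h1 := hb ⟨δ, rfl⟩
        have h2 := (hm δ).2
        linarith
      have hSm0 : (⨅ δ : D, Sm m δ) = 0 := Real.iInf_of_not_bddBelow hBm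
      rw [hS0, hSm0]
      simpa using le_of_lt hlam
  -- conclusion
  rw [Metric.tendsto_nhds]
  intro e he
  have he3 : (0:ℝ) < e / 3 := by linarith
  have h1 := key (e / 3) he3
  have h2 := keyV (e / 3) he3
  have h3 := (Metric.tendsto_nhds.mp happrox) (e / 3) he3
  filter_upwards [h1, h2, h3] with m hm1 hm2 hm3
  rw [Real.dist_eq, sub_zero] at hm3
  rw [Real.dist_eq]
  have ha := (hm1 (δm m)).1
  have hb := (hm1 (δm m)).2
  obtain ⟨hc1, hc2⟩ := abs_le.mp hm2
  obtain ⟨hd1, hd2⟩ := abs_lt.mp hm3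
  rw [abs_lt]
  constructor <;> linarith
end

section
/- In the setting N₁ = 0, N₂ > 0 with binary outcomes, the pair consisting of the treatment rule δ₂(0,n₂) = n₂/N₂ and nature's mixed strategy that puts probability 1/2 on each of the mean vectors (0, 1/2) and (1, 1/2) forms a Nash equilibrium of the zero-sum game in which nature's payoff is regret; in particular the rule δ₂(0,n₂) = n₂/N₂ is minimax regret, with value 1/4. -/
/-- The proportional rule `δ₂(0, n₂) = n₂/N₂`. -/
noncomputable def propRule (N₂ : ℕ) : ℕ → ℕ → ℝ := fun _ n₂ => (n₂ : ℝ) / N₂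

lemma bmean (N : ℕ) (x : ℝ) :
    ∑ n ∈ Finset.range (N+1), (n:ℝ) * (N.choose n) * x^n * (1-x)^(N-n) = N * x := by
  have h := bernsteinPolynomial.sum_smul ℝ N
  have h2 := congrArg (Polynomial.eval x) h
  simp [bernsteinPolynomial, Polynomial.eval_finset_sum, mul_comm, mul_assoc, mul_left_comm] at h2
  calc ∑ n ∈ Finset.range (N+1), (n:ℝ) * (N.choose n) * x^n * (1-x)^(N-n)
      = ∑ n ∈ Finset.range (N+1), x ^ n * ((n:ℝ) * ((N.choose n:ℝ) * (1 - x) ^ (N - n))) :=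
        Finset.sum_congr rfl (fun n _ => by ring)
    _ = x * N := h2
    _ = N * x := by ring

lemma expDelta_zero (N₂ : ℕ) (δ : ℕ → ℕ → ℝ) (μ₁ μ₂ : ℝ) :
    expDelta 0 N₂ δ μ₁ μ₂
    = ∑ n₂ ∈ Finset.range (N₂ + 1),
        δ 0 n₂ * (N₂.choose n₂ : ℝ) * μ₂ ^ n₂ * (1 - μ₂) ^ (N₂ - n₂) := by
  rw [expDelta, Finset.sum_range_one]
  exact Finset.sum_congr rfl (fun n _ => by simp)

lemma expDelta_prop (N₂ : ℕ) (hN : 0 < N₂) (μ₁ μ₂ : ℝ) :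
    expDelta 0 N₂ (propRule N₂) μ₁ μ₂ = μ₂ := by
  have hN' : (N₂ : ℝ) ≠ 0 := Nat.cast_ne_zero.mpr hN.ne'
  rw [expDelta_zero]
  calc ∑ n₂ ∈ Finset.range (N₂ + 1),
        propRule N₂ 0 n₂ * (N₂.choose n₂ : ℝ) * μ₂ ^ n₂ * (1 - μ₂) ^ (N₂ - n₂)
      = (∑ n₂ ∈ Finset.range (N₂ + 1),
          (n₂:ℝ) * (N₂.choose n₂ : ℝ) * μ₂ ^ n₂ * (1 - μ₂) ^ (N₂ - n₂)) / N₂ := by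
        rw [Finset.sum_div]
        exact Finset.sum_congr rfl (fun n _ => by simp [propRule]; ring)
    _ = ((N₂ : ℝ) * μ₂) / N₂ := by rw [bmean]
    _ = μ₂ := by field_simp

/-- with `N₁ = 0 < N₂`, the rule `δ₂(0,n₂) = n₂/N₂` together with nature's mixed
strategy putting mass `1/2` on each of `(0,1/2)` and `(1,1/2)` forms a Nash equilibrium of the
zero-sum game with payoff regret: both support points maximize regret against the rule
(with common value `1/4`), the rule is a best response (minimizes mixed expected regret)
against nature's mixture, and the rule is minimax regret with value `1/4`. -/
theorem stmt9 (N₂ : ℕ) (hN : 0 < N₂) :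
    (∀ μ₁ ∈ Set.Icc (0:ℝ) 1, ∀ μ₂ ∈ Set.Icc (0:ℝ) 1,
        regret2 0 N₂ (propRule N₂) μ₁ μ₂ ≤ 1 / 4) ∧
    regret2 0 N₂ (propRule N₂) 0 (1/2) = 1 / 4 ∧
    regret2 0 N₂ (propRule N₂) 1 (1/2) = 1 / 4 ∧
    (∀ δ' : ℕ → ℕ → ℝ, (∀ n₁ ≤ 0, ∀ n₂ ≤ N₂, δ' n₁ n₂ ∈ Set.Icc (0:ℝ) 1) →
      (1/2) * regret2 0 N₂ (propRule N₂) 0 (1/2) + (1/2) * regret2 0 N₂ (propRule N₂) 1 (1/2) ≤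
      (1/2) * regret2 0 N₂ δ' 0 (1/2) + (1/2) * regret2 0 N₂ δ' 1 (1/2)) ∧
    (∀ δ' : ℕ → ℕ → ℝ, (∀ n₁ ≤ 0, ∀ n₂ ≤ N₂, δ' n₁ n₂ ∈ Set.Icc (0:ℝ) 1) →
      ∃ μ₁ ∈ Set.Icc (0:ℝ) 1, ∃ μ₂ ∈ Set.Icc (0:ℝ) 1,
        (1:ℝ) / 4 ≤ regret2 0 N₂ δ' μ₁ μ₂) := by
  have hreg : ∀ μ₁ μ₂ : ℝ, regret2 0 N₂ (propRule N₂) μ₁ μ₂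
      = max μ₁ μ₂ - μ₁ * (1 - μ₂) - μ₂ * μ₂ := by
    intro μ₁ μ₂; rw [regret2, expDelta_prop N₂ hN]
  have heq : ∀ δ' : ℕ → ℕ → ℝ, expDelta 0 N₂ δ' 1 (1/2) = expDelta 0 N₂ δ' 0 (1/2) := by
    intro δ'; rw [expDelta_zero, expDelta_zero]
  have hr0 : regret2 0 N₂ (propRule N₂) 0 (1/2) = 1/4 := by
    rw [hreg]; norm_num
  have hr1 : regret2 0 N₂ (propRule N₂) 1 (1/2) = 1/4 := by
    rw [hreg]; norm_num
  have hgen0 : ∀ δ' : ℕ → ℕ → ℝ,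
      regret2 0 N₂ δ' 0 (1/2) = 1/2 - (1/2) * expDelta 0 N₂ δ' 0 (1/2) := by
    intro δ'; rw [regret2]; norm_num
  have hgen1 : ∀ δ' : ℕ → ℕ → ℝ,
      regret2 0 N₂ δ' 1 (1/2) = (1/2) * expDelta 0 N₂ δ' 0 (1/2) := by
    intro δ'; rw [regret2, heq]; norm_num; ring
  refine ⟨?_, hr0, hr1, ?_, ?_⟩
  · rintro μ₁ ⟨h1a, h1b⟩ μ₂ ⟨h2a, h2b⟩
    rw [hreg]
    rcases le_total μ₁ μ₂ with h | h
    · rw [max_eq_right h]; nlinarith [sq_nonneg (μ₂ - μ₁ - (1 - μ₂)), sq_nonneg (1 - μ₁)]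
    · rw [max_eq_left h]; nlinarith [sq_nonneg (1 - 2*μ₂), mul_nonneg (sub_nonneg.2 h1b) h2a]
  · intro δ' _
    rw [hr0, hr1, hgen0 δ', hgen1 δ']; ring_nf; linarith
  · intro δ' _
    rcases le_total (expDelta 0 N₂ δ' 0 (1/2)) (1/2) with h | h
    · exact ⟨0, by norm_num, 1/2, by norm_num, by rw [hgen0 δ']; linarith⟩
    · exact ⟨1, by norm_num, 1/2, by norm_num, by rw [hgen1 δ']; linarith⟩
end

section
/- Suppose nature plays a mixed strategy over mean vectors μ̄_m = (μ_{1m}, μ_{2m}) ∈ [0,1]² with probabilities p_m > 0, m = 1,...,2m̄, with ∑p_m = 1, satisfying the pairing condition (μ_{1m}, μ_{2m}) = (1 - μ_{1,m+m̄}, 1 - μ_{2,m+m̄}) and p_m = p_{m+m̄} for m = 1,...,m̄. Then for any two samples w_N = (n₁,n₂) and w_N' = (n₁',n₂') with n_t + n_t' = N_t for t = 1,2 and P(w_N) > 0, the posterior mean difference satisfies E(Y₁ | w_N) - E(Y₂ | w_N) = E(Y₂ | w_N') - E(Y₁ | w_N'). -/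
/-- Likelihood of observing `(n₁,n₂)` successes when nature picks the mean vector
`(μ1 m, μ2 m)`. -/
noncomputable def likeli (N₁ N₂ : ℕ) (μ1 μ2 : ℕ → ℝ) (m n₁ n₂ : ℕ) : ℝ :=
  (N₁.choose n₁ : ℝ) * (μ1 m) ^ n₁ * (1 - μ1 m) ^ (N₁ - n₁) *
    ((N₂.choose n₂ : ℝ) * (μ2 m) ^ n₂ * (1 - μ2 m) ^ (N₂ - n₂))

/-- Marginal probability of the sample `(n₁,n₂)` under nature's mixed strategy with `M`
support points. -/
noncomputable def margP (N₁ N₂ M : ℕ) (μ1 μ2 p : ℕ → ℝ) (n₁ n₂ : ℕ) : ℝ :=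
  ∑ m ∈ Finset.range M, p m * likeli N₁ N₂ μ1 μ2 m n₁ n₂

/-- Posterior mean (via Bayes' rule) of the coordinate `μt` given the sample `(n₁,n₂)`. -/
noncomputable def postMean (N₁ N₂ M : ℕ) (μt μ1 μ2 p : ℕ → ℝ) (n₁ n₂ : ℕ) : ℝ :=
  (∑ m ∈ Finset.range M, μt m * p m * likeli N₁ N₂ μ1 μ2 m n₁ n₂) /
    margP N₁ N₂ M μ1 μ2 p n₁ n₂

/-- if nature's mixed strategy satisfies the pairing condition, then the
posterior mean difference flips sign between a sample and its complement:
`E(Y₁|w) - E(Y₂|w) = E(Y₂|w') - E(Y₁|w')` where `w = (n₁,n₂)`, `w' = (N₁-n₁, N₂-n₂)`. -/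
theorem stmt11 (N₁ N₂ m' : ℕ) (μ1 μ2 p : ℕ → ℝ)
    (hμ1 : ∀ m < 2 * m', μ1 m ∈ Set.Icc (0:ℝ) 1)
    (hμ2 : ∀ m < 2 * m', μ2 m ∈ Set.Icc (0:ℝ) 1)
    (hp : ∀ m < 2 * m', 0 < p m)
    (hpsum : ∑ m ∈ Finset.range (2 * m'), p m = 1)
    (hpair1 : ∀ m < m', μ1 (m + m') = 1 - μ1 m)
    (hpair2 : ∀ m < m', μ2 (m + m') = 1 - μ2 m)
    (hpairp : ∀ m < m', p (m + m') = p m)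
    (n₁ n₂ : ℕ) (h₁ : n₁ ≤ N₁) (h₂ : n₂ ≤ N₂)
    (hpos : 0 < margP N₁ N₂ (2 * m') μ1 μ2 p n₁ n₂) :
    postMean N₁ N₂ (2 * m') μ1 μ1 μ2 p n₁ n₂ - postMean N₁ N₂ (2 * m') μ2 μ1 μ2 p n₁ n₂ =
      postMean N₁ N₂ (2 * m') μ2 μ1 μ2 p (N₁ - n₁) (N₂ - n₂) -
        postMean N₁ N₂ (2 * m') μ1 μ1 μ2 p (N₁ - n₁) (N₂ - n₂) := by
  have hL1 : ∀ m < m', likeli N₁ N₂ μ1 μ2 (m' + m) n₁ n₂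
      = likeli N₁ N₂ μ1 μ2 m (N₁ - n₁) (N₂ - n₂) := by
    intro m hm
    have e1 : μ1 (m' + m) = 1 - μ1 m := by rw [add_comm]; exact hpair1 m hm
    have e2 : μ2 (m' + m) = 1 - μ2 m := by rw [add_comm]; exact hpair2 m hm
    simp only [likeli, e1, e2, sub_sub_cancel, Nat.choose_symm h₁, Nat.choose_symm h₂,
      Nat.sub_sub_self h₁, Nat.sub_sub_self h₂]
    ring
  have hL2 : ∀ m < m', likeli N₁ N₂ μ1 μ2 (m' + m) (N₁ - n₁) (N₂ - n₂)
      = likeli N₁ N₂ μ1 μ2 m n₁ n₂ := by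
    intro m hm
    have e1 : μ1 (m' + m) = 1 - μ1 m := by rw [add_comm]; exact hpair1 m hm
    have e2 : μ2 (m' + m) = 1 - μ2 m := by rw [add_comm]; exact hpair2 m hm
    simp only [likeli, e1, e2, sub_sub_cancel, Nat.choose_symm h₁, Nat.choose_symm h₂,
      Nat.sub_sub_self h₁, Nat.sub_sub_self h₂]
    ring
  have hp' : ∀ m < m', p (m' + m) = p m := by
    intro m hm; rw [add_comm]; exact hpairp m hm
  have split : ∀ f : ℕ → ℝ, ∑ m ∈ Finset.range (2 * m'), f m
      = ∑ m ∈ Finset.range m', f m + ∑ m ∈ Finset.range m', f (m' + m) := by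
    intro f; rw [two_mul, Finset.sum_range_add]
  have hmarg : margP N₁ N₂ (2 * m') μ1 μ2 p (N₁ - n₁) (N₂ - n₂)
      = margP N₁ N₂ (2 * m') μ1 μ2 p n₁ n₂ := by
    unfold margP
    rw [split, split, add_comm]
    congr 1
    · refine Finset.sum_congr rfl fun m hm => ?_
      rw [Finset.mem_range] at hm
      rw [hp' m hm, hL2 m hm]
    · refine Finset.sum_congr rfl fun m hm => ?_
      rw [Finset.mem_range] at hm
      rw [hp' m hm, hL1 m hm]
  unfold postMean
  rw [hmarg, div_sub_div_same, div_sub_div_same]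
  congr 1
  rw [← Finset.sum_sub_distrib, ← Finset.sum_sub_distrib, split, split, add_comm]
  congr 1
  · refine Finset.sum_congr rfl fun m hm => ?_
    rw [Finset.mem_range] at hm
    have e1 : μ1 (m' + m) = 1 - μ1 m := by rw [add_comm]; exact hpair1 m hm
    have e2 : μ2 (m' + m) = 1 - μ2 m := by rw [add_comm]; exact hpair2 m hm
    rw [hp' m hm, hL1 m hm, e1, e2]
    ring
  · refine Finset.sum_congr rfl fun m hm => ?_
    rw [Finset.mem_range] at hm
    have e1 : μ1 (m' + m) = 1 - μ1 m := by rw [add_comm]; exact hpair1 m hm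
    have e2 : μ2 (m' + m) = 1 - μ2 m := by rw [add_comm]; exact hpair2 m hm
    rw [hp' m hm, hL2 m hm, e1, e2]
    ring
end

section
/- Suppose δ is a minimax regret rule for the problem with outcomes in {0,1}^T and mean vectors constrained to M ⊆ [0,1]^T, under fixed-assignment sampling. Define the coarsened rule δ^C for outcomes in [0,1]^T by δ^C(w_N) = δ(w̃_N), where w̃_N replaces each observed outcome y ∈ [0,1] by an independent Bernoulli(y) draw. Then δ^C is a minimax regret rule for the problem where outcomes lie in [0,1]^T with the same mean restriction M; moreover the minimax regret values of the two problems coincide. -/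
open MeasureTheory

/-- The coarsened rule: given a binary-sample rule `δb`, the coarsened rule applied to a
sample `w` with outcomes in `[0,1]` assigns treatment `t` with the expected probability of
`δb` applied to independent Bernoulli(`w i`) coarsenings of the observations. -/
noncomputable def coarsen {ι : Type*} [Fintype ι] [DecidableEq ι] {T : ℕ}
    (δb : (ι → Bool) → Fin T → ℝ) (w : ι → ℝ) (t : Fin T) : ℝ :=
  ∑ b : ι → Bool, (∏ i, if b i then w i else 1 - w i) * δb b t

/-- Expected probability that the binary-sample rule `δb` assigns treatment `t`, when
observation `i` is Bernoulli with mean `μ (τ i)` (`τ` is the fixed treatment assignment). -/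
noncomputable def binExp {ι : Type*} [Fintype ι] [DecidableEq ι] {T : ℕ}
    (τ : ι → Fin T) (δb : (ι → Bool) → Fin T → ℝ) (μ : Fin T → ℝ) (t : Fin T) : ℝ :=
  ∑ b : ι → Bool, (∏ i, if b i then μ (τ i) else 1 - μ (τ i)) * δb b t

/-- Regret of a binary-sample rule at the mean vector `μ` (binary-outcome problem). -/
noncomputable def binRegret {ι : Type*} [Fintype ι] [DecidableEq ι] {T : ℕ}
    (τ : ι → Fin T) (δb : (ι → Bool) → Fin T → ℝ) (μ : Fin T → ℝ) : ℝ :=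
  (⨆ t, μ t) - ∑ t, μ t * binExp τ δb μ t

/-- Mean vector of a state (a tuple of outcome distributions). -/
noncomputable def stateMean {T : ℕ} (s : Fin T → Measure ℝ) (t : Fin T) : ℝ :=
  ∫ x, x ∂ s t

/-- Regret of a rule for `[0,1]`-valued outcomes at state `s`, under fixed assignment `τ`. -/
noncomputable def contRegret {ι : Type*} [Fintype ι] {T : ℕ}
    (τ : ι → Fin T) (δ : (ι → ℝ) → Fin T → ℝ) (s : Fin T → Measure ℝ) : ℝ :=
  (⨆ t, stateMean s t) - ∑ t, stateMean s t * ∫ w, δ w t ∂ (Measure.pi fun i => s (τ i))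

/-- A valid (possibly randomized, measurable) rule for the `[0,1]`-outcome problem. -/
def IsRuleC {ι : Type*} {T : ℕ} (δ : (ι → ℝ) → Fin T → ℝ) : Prop :=
  (∀ t, Measurable fun w => δ w t) ∧ (∀ w t, 0 ≤ δ w t) ∧ ∀ w, ∑ t, δ w t = 1

/-- A valid rule for the binary-outcome problem. -/
def IsRuleB {ι : Type*} {T : ℕ} (δb : (ι → Bool) → Fin T → ℝ) : Prop :=
  (∀ b t, 0 ≤ δb b t) ∧ ∀ b, ∑ t, δb b t = 1

/-- An admissible state: each marginal is a probability distribution on `[0,1]`, with mean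
vector in `M`. -/
def IsState {T : ℕ} (M : Set (Fin T → ℝ)) (s : Fin T → Measure ℝ) : Prop :=
  (∀ t, IsProbabilityMeasure (s t)) ∧ (∀ t, s t (Set.Icc (0:ℝ) 1) = 1) ∧ stateMean s ∈ M



lemma ae_mem_Icc {ν : Measure ℝ} [IsProbabilityMeasure ν] (h : ν (Set.Icc (0:ℝ) 1) = 1) :
    ∀ᵐ x ∂ν, x ∈ Set.Icc (0:ℝ) 1 := by
  rw [ae_iff]
  have := measure_compl (μ := ν) (measurableSet_Icc (a := (0:ℝ)) (b := 1)) (measure_ne_top ν _)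
  simp only [measure_univ, h] at this
  simpa [Set.compl_def] using this

lemma integrable_id_of_Icc {ν : Measure ℝ} [IsProbabilityMeasure ν]
    (h : ν (Set.Icc (0:ℝ) 1) = 1) : Integrable (fun x : ℝ => x) ν := by
  refine Integrable.mono' (integrable_const 1) measurable_id.aestronglyMeasurable ?_
  filter_upwards [ae_mem_Icc h] with x hx
  rw [Real.norm_eq_abs, abs_le]; constructor <;> linarith [hx.1, hx.2]

def RCopy {ι : Type*} (_ : ι) : Type := ℝ

lemma integral_pi_prod {ι : Type*} [Fintype ι] (m : ι → Measure ℝ)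
    [hm : ∀ i, IsProbabilityMeasure (m i)] (f : ι → ℝ → ℝ) :
    ∫ w : ι → ℝ, ∏ i, f i (w i) ∂(Measure.pi m) = ∏ i, ∫ x, f i x ∂(m i) := by
  letI I : ∀ i : ι, MeasureSpace (RCopy i) :=
    fun i => { toMeasurableSpace := Real.measurableSpace, volume := m i }
  haveI S : ∀ i : ι, SigmaFinite (volume : Measure (RCopy i)) :=
    fun i => inferInstanceAs (SigmaFinite (m i))
  have h := MeasureTheory.integral_fintype_prod_volume_eq_prod (𝕜 := ℝ) (ι := ι) (E := fun i : ι => RCopy i)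
    (fun i (x : RCopy i) => f i x)
  rw [MeasureTheory.volume_pi] at h
  exact h

lemma ae_pi_mem {ι : Type*} [Fintype ι] (m : ι → Measure ℝ) [∀ i, IsProbabilityMeasure (m i)]
    (h : ∀ i, m i (Set.Icc (0:ℝ) 1) = 1) :
    ∀ᵐ w ∂(Measure.pi m), ∀ i, w i ∈ Set.Icc (0:ℝ) 1 := by
  have hbox : Measure.pi m (Set.pi Set.univ fun _ => Set.Icc (0:ℝ) 1) = 1 := by
    rw [Measure.pi_pi]; simp [h]
  rw [ae_iff]
  have hc := measure_compl (μ := Measure.pi m)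
    (s := Set.pi Set.univ fun _ : ι => Set.Icc (0:ℝ) 1)
    (MeasurableSet.univ_pi fun _ => measurableSet_Icc) (measure_ne_top _ _)
  rw [measure_univ, hbox] at hc
  have hset : {w : ι → ℝ | ¬ ∀ i, w i ∈ Set.Icc (0:ℝ) 1}
      = (Set.pi Set.univ fun _ : ι => Set.Icc (0:ℝ) 1)ᶜ := by
    ext w
    simp only [Set.mem_setOf_eq, Set.mem_compl_iff, Set.mem_pi, Set.mem_univ, true_implies]
  rw [hset, hc]; simp

lemma prod_if_abs_le_one {ι : Type*} [Fintype ι] {b : ι → Bool} {w : ι → ℝ}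
    (hw : ∀ i, w i ∈ Set.Icc (0:ℝ) 1) :
    |∏ i, if b i then w i else 1 - w i| ≤ 1 := by
  rw [Finset.abs_prod]
  refine Finset.prod_le_one (fun i _ => abs_nonneg _) fun i _ => ?_
  have h1 := (hw i).1; have h2 := (hw i).2
  rw [abs_le]
  cases hb : b i <;> simp only [hb, Bool.false_eq_true, if_false, if_true] <;>
    constructor <;> linarith

lemma measurable_prod_if {ι : Type*} [Fintype ι] (b : ι → Bool) :
    Measurable fun w : ι → ℝ => ∏ i, if b i then w i else 1 - w i := by
  refine Finset.measurable_prod _ fun i _ => ?_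
  cases hb : b i <;> simp only [hb, Bool.false_eq_true, if_false, if_true]
  · exact measurable_const.sub (measurable_pi_apply i)
  · exact measurable_pi_apply i

lemma integral_coarsen {ι : Type*} [Fintype ι] [DecidableEq ι] {T : ℕ}
    (τ : ι → Fin T) (δb : (ι → Bool) → Fin T → ℝ) (s : Fin T → Measure ℝ)
    (hp : ∀ t, IsProbabilityMeasure (s t)) (hsupp : ∀ t, s t (Set.Icc (0:ℝ) 1) = 1) (t : Fin T) :
    ∫ w, coarsen δb w t ∂(Measure.pi fun i => s (τ i)) = binExp τ δb (stateMean s) t := by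
  haveI : ∀ i, IsProbabilityMeasure (s (τ i)) := fun i => hp _
  have hae := ae_pi_mem (fun i => s (τ i)) (fun i => hsupp _)
  have hint : ∀ b : ι → Bool, Integrable
      (fun w : ι → ℝ => (∏ i, if b i then w i else 1 - w i) * δb b t)
      (Measure.pi fun i => s (τ i)) := by
    intro b
    refine Integrable.mono' (integrable_const |δb b t|)
      (((measurable_prod_if b).mul_const _).aestronglyMeasurable) ?_
    filter_upwards [hae] with w hw
    rw [Real.norm_eq_abs, abs_mul]
    calc |∏ i, if b i then w i else 1 - w i| * |δb b t|
        ≤ 1 * |δb b t| := by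
          exact mul_le_mul_of_nonneg_right (prod_if_abs_le_one hw) (abs_nonneg _)
      _ = |δb b t| := one_mul _
  unfold coarsen binExp
  rw [integral_finset_sum _ fun b _ => hint b]
  refine Finset.sum_congr rfl fun b _ => ?_
  rw [integral_mul_const]
  congr 1
  rw [integral_pi_prod (fun i => s (τ i)) (fun i x => if b i then x else 1 - x)]
  refine Finset.prod_congr rfl fun i _ => ?_
  cases hb : b i <;> simp only [hb, Bool.false_eq_true, if_false, if_true]
  · rw [integral_sub (integrable_const 1) (integrable_id_of_Icc (hsupp _))]
    simp [stateMean]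
  · rfl

/- ===== Bernoulli states ===== -/

noncomputable def bernB (p : ℝ) : Measure Bool :=
  ENNReal.ofReal (1 - p) • Measure.dirac false + ENNReal.ofReal p • Measure.dirac true

noncomputable def bern01 (p : ℝ) : Measure ℝ :=
  Measure.map (fun b : Bool => if b then (1:ℝ) else 0) (bernB p)

lemma measurable_emb : Measurable (fun b : Bool => if b then (1:ℝ) else 0) :=
  measurable_from_top

lemma bernB_prob {p : ℝ} (hp : p ∈ Set.Icc (0:ℝ) 1) : IsProbabilityMeasure (bernB p) := by
  constructor
  simp only [bernB, Measure.add_apply, Measure.smul_apply, smul_eq_mul, measure_univ, mul_one]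
  rw [← ENNReal.ofReal_add (by linarith [hp.2]) hp.1]
  norm_num

lemma bernB_singleton_true (p : ℝ) : bernB p {true} = ENNReal.ofReal p := by
  simp [bernB, Measure.dirac_apply' _ (measurableSet_singleton _)]

lemma bernB_singleton_false (p : ℝ) : bernB p {false} = ENNReal.ofReal (1 - p) := by
  simp [bernB, Measure.dirac_apply' _ (measurableSet_singleton _)]

lemma bern01_prob {p : ℝ} (hp : p ∈ Set.Icc (0:ℝ) 1) : IsProbabilityMeasure (bern01 p) := by
  haveI := bernB_prob hp
  exact Measure.isProbabilityMeasure_map measurable_emb.aemeasurable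

lemma bern01_Icc {p : ℝ} (hp : p ∈ Set.Icc (0:ℝ) 1) : bern01 p (Set.Icc (0:ℝ) 1) = 1 := by
  haveI := bernB_prob hp
  rw [bern01, Measure.map_apply measurable_emb measurableSet_Icc]
  have : (fun b : Bool => if b then (1:ℝ) else 0) ⁻¹' Set.Icc 0 1 = Set.univ := by
    ext b; cases b <;> simp
  rw [this, measure_univ]

lemma bern01_mean {p : ℝ} (hp : p ∈ Set.Icc (0:ℝ) 1) : (∫ x, x ∂ bern01 p) = p := by
  haveI := bernB_prob hp
  rw [bern01, integral_map (f := fun x : ℝ => x) measurable_emb.aemeasurable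
    measurable_id'.aestronglyMeasurable]
  rw [integral_fintype (Integrable.of_finite)]
  simp only [measureReal_def, Fintype.sum_bool, bernB_singleton_true, bernB_singleton_false]
  rw [ENNReal.toReal_ofReal hp.1]
  simp

lemma stateMean_bern {T : ℕ} {μ : Fin T → ℝ} (hμ : ∀ t, μ t ∈ Set.Icc (0:ℝ) 1) :
    stateMean (fun t => bern01 (μ t)) = μ := by
  funext t; exact bern01_mean (hμ t)

lemma pi_bern {ι : Type*} [Fintype ι] (p : ι → ℝ) (hp : ∀ i, p i ∈ Set.Icc (0:ℝ) 1) :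
    Measure.pi (fun i => bern01 (p i)) =
      Measure.map (fun (b : ι → Bool) (i : ι) => if b i then (1:ℝ) else 0)
        (Measure.pi fun i => bernB (p i)) := by
  haveI : ∀ i, IsProbabilityMeasure (bernB (p i)) := fun i => bernB_prob (hp i)
  haveI : ∀ i, IsProbabilityMeasure (bern01 (p i)) := fun i => bern01_prob (hp i)
  have hmeas : Measurable (fun (b : ι → Bool) (i : ι) => if b i then (1:ℝ) else 0) :=
    measurable_pi_lambda _ fun i => measurable_emb.comp (measurable_pi_apply i)
  refine Measure.pi_eq (μ := fun i => bern01 (p i)) fun s hs => ?_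
  rw [Measure.map_apply hmeas (MeasurableSet.univ_pi hs)]
  have hpre : (fun (b : ι → Bool) (i : ι) => if b i then (1:ℝ) else 0) ⁻¹' Set.pi Set.univ s
      = Set.pi Set.univ fun i => (fun b : Bool => if b then (1:ℝ) else 0) ⁻¹' s i := by
    ext b; simp [Set.mem_pi]
  rw [hpre, Measure.pi_pi]
  exact Finset.prod_congr rfl fun i _ =>
    (Measure.map_apply measurable_emb (hs i)).symm

lemma integral_pi_bernB {ι : Type*} [Fintype ι] [DecidableEq ι] (p : ι → ℝ) (hp : ∀ i, p i ∈ Set.Icc (0:ℝ) 1)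
    (g : (ι → Bool) → ℝ) :
    ∫ b, g b ∂(Measure.pi fun i => bernB (p i)) =
      ∑ b : ι → Bool, (∏ i, if b i then p i else 1 - p i) * g b := by
  haveI : ∀ i, IsProbabilityMeasure (bernB (p i)) := fun i => bernB_prob (hp i)
  rw [integral_fintype (Integrable.of_finite)]
  refine Finset.sum_congr rfl fun b _ => ?_
  have hsing : ({b} : Set (ι → Bool)) = Set.pi Set.univ fun i => {b i} := by
    ext c; simp [funext_iff, Set.mem_pi]
  rw [measureReal_def, hsing, Measure.pi_pi, smul_eq_mul, ENNReal.toReal_prod]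
  congr 1
  refine Finset.prod_congr rfl fun i _ => ?_
  cases hb : b i
  · rw [bernB_singleton_false, ENNReal.toReal_ofReal (by linarith [(hp i).2])]; simp
  · rw [bernB_singleton_true, ENNReal.toReal_ofReal (hp i).1]; simp

lemma integral_rule_bern {ι : Type*} [Fintype ι] [DecidableEq ι] {T : ℕ} (τ : ι → Fin T)
    (δ' : (ι → ℝ) → Fin T → ℝ) (hδ' : IsRuleC δ') (μ : Fin T → ℝ)
    (hμ : ∀ t, μ t ∈ Set.Icc (0:ℝ) 1) (t : Fin T) :
    ∫ w, δ' w t ∂(Measure.pi fun i => bern01 (μ (τ i))) =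
      binExp τ (fun b => δ' (fun i => if b i then (1:ℝ) else 0)) μ t := by
  haveI : ∀ i, IsProbabilityMeasure (bernB (μ (τ i))) := fun i => bernB_prob (hμ _)
  have hmeas : Measurable (fun (b : ι → Bool) (i : ι) => if b i then (1:ℝ) else 0) :=
    measurable_pi_lambda _ fun i => measurable_emb.comp (measurable_pi_apply i)
  rw [pi_bern (fun i => μ (τ i)) (fun i => hμ _),
    integral_map hmeas.aemeasurable (hδ'.1 t).aestronglyMeasurable,
    integral_pi_bernB (fun i => μ (τ i)) (fun i => hμ _)]
  rfl


lemma bern_isState {T : ℕ} {M : Set (Fin T → ℝ)} {μ : Fin T → ℝ} (hμM : μ ∈ M)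
    (hμ : ∀ t, μ t ∈ Set.Icc (0:ℝ) 1) : IsState M (fun t => bern01 (μ t)) :=
  ⟨fun t => bern01_prob (hμ t), fun t => bern01_Icc (hμ t), by rw [stateMean_bern hμ]; exact hμM⟩

lemma contRegret_coarsen_eq {ι : Type*} [Fintype ι] [DecidableEq ι] {T : ℕ}
    (τ : ι → Fin T) (δb : (ι → Bool) → Fin T → ℝ) (s : Fin T → Measure ℝ)
    (hp : ∀ t, IsProbabilityMeasure (s t)) (hsupp : ∀ t, s t (Set.Icc (0:ℝ) 1) = 1) :
    contRegret τ (coarsen δb) s = binRegret τ δb (stateMean s) := by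
  unfold contRegret binRegret
  congr 1
  exact Finset.sum_congr rfl fun t _ => by rw [integral_coarsen τ δb s hp hsupp t]

lemma contRegret_bern_eq {ι : Type*} [Fintype ι] [DecidableEq ι] {T : ℕ} (τ : ι → Fin T)
    (δ' : (ι → ℝ) → Fin T → ℝ) (hδ' : IsRuleC δ') (μ : Fin T → ℝ)
    (hμ : ∀ t, μ t ∈ Set.Icc (0:ℝ) 1) :
    contRegret τ δ' (fun t => bern01 (μ t)) =
      binRegret τ (fun b => δ' (fun i => if b i then (1:ℝ) else 0)) μ := by
  unfold contRegret binRegret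
  rw [stateMean_bern hμ]
  congr 1
  exact Finset.sum_congr rfl fun t _ => by rw [integral_rule_bern τ δ' hδ' μ hμ t]

lemma contRegret_le_one {ι : Type*} [Fintype ι] {T : ℕ} (hT : 0 < T) (τ : ι → Fin T)
    {M : Set (Fin T → ℝ)} (hM : ∀ μ ∈ M, ∀ t, μ t ∈ Set.Icc (0:ℝ) 1)
    (δ' : (ι → ℝ) → Fin T → ℝ) (hδ'0 : ∀ w t, 0 ≤ δ' w t)
    {s : Fin T → Measure ℝ} (hs : IsState M s) : contRegret τ δ' s ≤ 1 := by
  haveI : Nonempty (Fin T) := ⟨⟨0, hT⟩⟩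
  have h1 : (⨆ t, stateMean s t) ≤ 1 := ciSup_le fun t => (hM _ hs.2.2 t).2
  have h2 : 0 ≤ ∑ t, stateMean s t * ∫ w, δ' w t ∂(Measure.pi fun i => s (τ i)) :=
    Finset.sum_nonneg fun t _ => mul_nonneg (hM _ hs.2.2 t).1
      (integral_nonneg fun w => hδ'0 w t)
  unfold contRegret; linarith

/-- if `δb` is minimax regret for the binary-outcome problem with mean
restriction `M` under fixed assignment, then its coarsening is minimax regret for the
`[0,1]`-outcome problem with the same mean restriction, and the two minimax values coincide. -/
theorem stmt16 {ι : Type*} [Fintype ι] [DecidableEq ι] {T : ℕ} (hT : 0 < T)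
    (τ : ι → Fin T) (M : Set (Fin T → ℝ)) (hMne : M.Nonempty)
    (hM : ∀ μ ∈ M, ∀ t, μ t ∈ Set.Icc (0:ℝ) 1)
    (δb : (ι → Bool) → Fin T → ℝ) (hδb : IsRuleB δb)
    (hminimax : ∀ δb' : (ι → Bool) → Fin T → ℝ, IsRuleB δb' →
      sSup ((fun μ => binRegret τ δb μ) '' M) ≤ sSup ((fun μ => binRegret τ δb' μ) '' M)) :
    (∀ δ' : (ι → ℝ) → Fin T → ℝ, IsRuleC δ' →
      sSup ((fun s => contRegret τ (coarsen δb) s) '' {s | IsState M s}) ≤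
        sSup ((fun s => contRegret τ δ' s) '' {s | IsState M s})) ∧
    sSup ((fun s => contRegret τ (coarsen δb) s) '' {s | IsState M s}) =
      sSup ((fun μ => binRegret τ δb μ) '' M) := by
  have hset : (fun s => contRegret τ (coarsen δb) s) '' {s | IsState M s}
      = (fun μ => binRegret τ δb μ) '' M := by
    ext x
    constructor
    · rintro ⟨s, hs, rfl⟩
      exact ⟨stateMean s, hs.2.2, (contRegret_coarsen_eq τ δb s hs.1 hs.2.1).symm⟩
    · rintro ⟨μ, hμ, rfl⟩
      refine ⟨fun t => bern01 (μ t), bern_isState hμ (hM μ hμ), ?_⟩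
      have hst := bern_isState hμ (hM μ hμ)
      show contRegret τ (coarsen δb) (fun t => bern01 (μ t)) = binRegret τ δb μ
      rw [contRegret_coarsen_eq τ δb _ hst.1 hst.2.1, stateMean_bern (hM μ hμ)]
  have heq : sSup ((fun s => contRegret τ (coarsen δb) s) '' {s | IsState M s})
      = sSup ((fun μ => binRegret τ δb μ) '' M) := by rw [hset]
  refine ⟨fun δ' hδ' => ?_, heq⟩
  set δb' : (ι → Bool) → Fin T → ℝ := fun b => δ' (fun i => if b i then (1:ℝ) else 0) with hδb'
  have hruleB : IsRuleB δb' := ⟨fun b t => hδ'.2.1 _ t, fun b => hδ'.2.2 _⟩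
  have hsub : (fun μ => binRegret τ δb' μ) '' M ⊆
      (fun s => contRegret τ δ' s) '' {s | IsState M s} := by
    rintro x ⟨μ, hμ, rfl⟩
    exact ⟨fun t => bern01 (μ t), bern_isState hμ (hM μ hμ),
      contRegret_bern_eq τ δ' hδ' μ (hM μ hμ)⟩
  have hbdd : BddAbove ((fun s => contRegret τ δ' s) '' {s | IsState M s}) := by
    refine ⟨1, ?_⟩
    rintro x ⟨s, hs, rfl⟩
    exact contRegret_le_one hT τ hM δ' hδ'.2.1 hs
  have hne : ((fun μ => binRegret τ δb' μ) '' M).Nonempty := hMne.image _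
  calc sSup ((fun s => contRegret τ (coarsen δb) s) '' {s | IsState M s})
      = sSup ((fun μ => binRegret τ δb μ) '' M) := heq
    _ ≤ sSup ((fun μ => binRegret τ δb' μ) '' M) := hminimax δb' hruleB
    _ ≤ sSup ((fun s => contRegret τ δ' s) '' {s | IsState M s}) :=
        csSup_le_csSup hbdd hne hsub
end
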